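/- arXiv:1712.04894 — 3 statements merged into one kernel-verified Lean document; each statement's English description precedes it below -/
import Mathlib

section
/- Let α be such that M(α) : ℓ²(ℕ+) → ℓ²(ℕ+) is bounded, and for 0 < r < 1 let α_r = D_r α, i.e. α_r(n) = r^{Ω'(n)} α(n). Then M(α_r) = D_r M(α) D_r as operators; consequently M(α_r) is compact and ‖M(α_r)‖ ≤ ‖M(α)‖. -/
open scoped ComplexConjugate ENNReal

noncomputable section

abbrev H := lp (fun _ : ℕ+ => ℂ) 2

/-- Ω'(n) = ∑_j j·κ_j where κ_j is the exponent of the j-th prime in n. -/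
def Om (n : ℕ+) : ℕ := (n : ℕ).factorization.sum fun p k => p.primeCounting * k

/-- `T` is the multiplicative Hankel operator with matrix `{α(nm)}`:
the matrix entry `⟨T e_n, e_m⟩` equals `α (n*m)`. -/
def IsHankel (T : H →L[ℂ] H) (α : ℕ+ → ℂ) : Prop :=
  ∀ n m : ℕ+, (T (lp.single 2 n 1) : ℕ+ → ℂ) m = α (n * m)

/-! ### Auxiliary lemmas -/

lemma Om_mul (n m : ℕ+) : Om (n * m) = Om n + Om m := by
  unfold Om
  rw [PNat.mul_coe, Nat.factorization_mul n.pos.ne' m.pos.ne']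
  exact Finsupp.sum_add_index' (fun p => mul_zero _) (fun p b c => mul_add _ _ _)

/-- If `Om n ≤ M` then `n` is bounded, so sublevel sets of `Om` are finite. -/
lemma pnat_le_of_Om_le {n : ℕ+} {M : ℕ} (h : Om n ≤ M) :
    (n : ℕ) ≤ (Nat.nth Nat.Prime M) ^ M := by
  set Q := Nat.nth Nat.Prime M with hQ
  have hQprime : Nat.Prime Q := Nat.prime_nth_prime M
  have hn : (n : ℕ) ≠ 0 := n.pos.ne'
  set s := (n : ℕ).factorization.support with hs
  have hterm : ∀ p ∈ s, p.primeCounting * (n : ℕ).factorization p ≤ Om n := by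
    intro p hp
    exact Finset.single_le_sum (f := fun p => p.primeCounting * (n : ℕ).factorization p)
      (fun q _ => Nat.zero_le _) hp
  have hpc : ∀ p ∈ s, 1 ≤ p.primeCounting := by
    intro p hp
    have hprime : p.Prime := Nat.prime_of_mem_primeFactors
      (by rwa [← Nat.support_factorization])
    have : Nat.primeCounting p = Nat.count Nat.Prime p + 1 := by
      rw [Nat.primeCounting, Nat.primeCounting', Nat.count_succ, if_pos hprime]
    omega
  have hple : ∀ p ∈ s, p ≤ Q := by
    intro p hp
    have hprime : p.Prime := Nat.prime_of_mem_primeFactors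
      (by rwa [← Nat.support_factorization])
    have hk : 1 ≤ (n : ℕ).factorization p := by
      rw [hs, Finsupp.mem_support_iff] at hp; omega
    have h1 : Nat.primeCounting p ≤ Om n := by
      calc Nat.primeCounting p ≤ Nat.primeCounting p * (n : ℕ).factorization p :=
            Nat.le_mul_of_pos_right _ hk
        _ ≤ Om n := hterm p hp
    have h2 : Nat.primeCounting p = Nat.count Nat.Prime p + 1 := by
      rw [Nat.primeCounting, Nat.primeCounting', Nat.count_succ, if_pos hprime]
    have h3 : Nat.count Nat.Prime p ≤ M := by omega
    calc p = Nat.nth Nat.Prime (Nat.count Nat.Prime p) := (Nat.nth_count hprime).symm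
      _ ≤ Q := Nat.nth_monotone Nat.infinite_setOf_prime h3
  have hsum : ∑ p ∈ s, (n : ℕ).factorization p ≤ M := by
    calc ∑ p ∈ s, (n : ℕ).factorization p
        ≤ ∑ p ∈ s, p.primeCounting * (n : ℕ).factorization p := by
          apply Finset.sum_le_sum
          intro p hp
          exact Nat.le_mul_of_pos_left _ (hpc p hp)
      _ = Om n := rfl
      _ ≤ M := h
  calc (n : ℕ) = ∏ p ∈ s, p ^ (n : ℕ).factorization p :=
        (Nat.factorization_prod_pow_eq_self hn).symm
    _ ≤ ∏ p ∈ s, Q ^ (n : ℕ).factorization p := by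
        apply Finset.prod_le_prod'
        intro p hp
        exact Nat.pow_le_pow_left (hple p hp) _
    _ = Q ^ (∑ p ∈ s, (n : ℕ).factorization p) := Finset.prod_pow_eq_pow_sum s _ Q
    _ ≤ Q ^ M := Nat.pow_le_pow_right hQprime.pos hsum

lemma finite_sublevel (M : ℕ) : {n : ℕ+ | Om n ≤ M}.Finite := by
  apply Set.Finite.subset
    (Set.Finite.preimage (f := fun n : ℕ+ => (n : ℕ))
      (PNat.coe_injective.injOn) (Set.finite_Iic ((Nat.nth Nat.Prime M) ^ M)))
  intro n hn
  exact pnat_le_of_Om_le hn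

/-- Evaluation at a coordinate as a continuous linear functional on `H`. -/
def evalCLM (n : ℕ+) : H →L[ℂ] ℂ :=
  LinearMap.mkContinuous
    { toFun := fun f => (f : ℕ+ → ℂ) n
      map_add' := fun f g => by simp [lp.coeFn_add]
      map_smul' := fun c f => by simp [lp.coeFn_smul] }
    1 (fun f => by
      rw [one_mul]; exact lp.norm_apply_le_norm (p := 2) (by norm_num) f n)

@[simp] lemma evalCLM_apply (n : ℕ+) (f : H) : evalCLM n f = (f : ℕ+ → ℂ) n := rfl

/-- A rank-one operator is compact. -/
lemma isCompactOperator_smulRight (φ : H →L[ℂ] ℂ) (v : H) :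
    IsCompactOperator ⇑(φ.smulRight v) := by
  refine ⟨(fun c : ℂ => c • v) '' Metric.closedBall 0 1,
    (isCompact_closedBall (0 : ℂ) 1).image (continuous_id.smul continuous_const), ?_⟩
  have h1 : φ ⁻¹' Metric.closedBall 0 1 ∈ nhds (0 : H) := by
    apply φ.continuous.continuousAt.preimage_mem_nhds
    rw [map_zero]
    exact Metric.closedBall_mem_nhds 0 one_pos
  refine Filter.mem_of_superset h1 ?_
  intro x hx
  exact ⟨φ x, hx, by simp⟩

lemma isCompactOperator_sum {ι : Type*} (s : Finset ι) (f : ι → (H →L[ℂ] H))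
    (h : ∀ i ∈ s, IsCompactOperator ⇑(f i)) : IsCompactOperator ⇑(∑ i ∈ s, f i) := by
  classical
  induction s using Finset.induction_on with
  | empty => simpa using (isCompactOperator_zero (M₁ := H) (M₂ := H))
  | @insert a t hx ih =>
    rw [Finset.sum_insert hx]
    have : ⇑(f a + ∑ i ∈ t, f i) = ⇑(f a) + ⇑(∑ i ∈ t, f i) := rfl
    rw [this]
    exact (h a (Finset.mem_insert_self a t)).add
      (ih fun i hi => h i (Finset.mem_insert_of_mem hi))

/-- Two operators on `H` agreeing on the standard basis vectors are equal. -/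
lemma clm_ext_single (S₁ S₂ : H →L[ℂ] H)
    (h : ∀ n, S₁ (lp.single 2 n 1) = S₂ (lp.single 2 n 1)) : S₁ = S₂ := by
  refine ContinuousLinearMap.ext fun a => ?_
  have hsum := lp.hasSum_single (E := fun _ : ℕ+ => ℂ) (p := 2) (by norm_num) a
  have h1 := hsum.mapL S₁
  have h2 := hsum.mapL S₂
  have hfun : ∀ (S : H →L[ℂ] H) (n : ℕ+),
      S (lp.single 2 n ((a : ℕ+ → ℂ) n)) = ((a : ℕ+ → ℂ) n) • S (lp.single 2 n 1) := by
    intro S n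
    have : lp.single 2 n ((a : ℕ+ → ℂ) n) = ((a : ℕ+ → ℂ) n) • (lp.single 2 n 1 : H) := by
      rw [← lp.single_smul]
      congr 1
      simp [smul_eq_mul]
    rw [this, map_smul]
  refine h1.unique ?_
  have he : (fun n => S₁ (lp.single 2 n ((a : ℕ+ → ℂ) n)))
      = fun n => S₂ (lp.single 2 n ((a : ℕ+ → ℂ) n)) := by
    funext n
    rw [hfun S₁, hfun S₂, h]
  rw [he]
  exact h2

/-- A coordinatewise domination implies a norm bound in `ℓ²`. -/
lemma norm_le_of_coord (f a : H) (c : ℝ) (hc : 0 ≤ c)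
    (h : ∀ m, ‖(f : ℕ+ → ℂ) m‖ ≤ c * ‖(a : ℕ+ → ℂ) m‖) : ‖f‖ ≤ c * ‖a‖ := by
  have hp : 0 < (2 : ℝ≥0∞).toReal := by norm_num
  refine lp.norm_le_of_forall_sum_le hp (mul_nonneg hc (norm_nonneg a)) ?_
  intro s
  calc ∑ i ∈ s, ‖(f : ℕ+ → ℂ) i‖ ^ (2 : ℝ≥0∞).toReal
      ≤ ∑ i ∈ s, c ^ (2 : ℝ≥0∞).toReal * ‖(a : ℕ+ → ℂ) i‖ ^ (2 : ℝ≥0∞).toReal := by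
        apply Finset.sum_le_sum
        intro i _
        rw [← Real.mul_rpow hc (norm_nonneg _)]
        exact Real.rpow_le_rpow (norm_nonneg _) (h i) (by norm_num)
    _ = c ^ (2 : ℝ≥0∞).toReal * ∑ i ∈ s, ‖(a : ℕ+ → ℂ) i‖ ^ (2 : ℝ≥0∞).toReal := by
        rw [Finset.mul_sum]
    _ ≤ c ^ (2 : ℝ≥0∞).toReal * ‖a‖ ^ (2 : ℝ≥0∞).toReal :=
        mul_le_mul_of_nonneg_left (lp.sum_rpow_le_norm_rpow hp a s) (Real.rpow_nonneg hc _)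
    _ = (c * ‖a‖) ^ (2 : ℝ≥0∞).toReal := (Real.mul_rpow hc (norm_nonneg _)).symm

/-- if `M(α)` is bounded, `D_r` is the diagonal operator by `r^{Ω'}` and
`M(α_r)` is the Hankel operator of `α_r = D_r α`, then `M(α_r) = D_r M(α) D_r`,
`M(α_r)` is compact and `‖M(α_r)‖ ≤ ‖M(α)‖`. -/
theorem hankel_dilation_eq (r : ℝ) (hr0 : 0 < r) (hr1 : r < 1)
    (α : ℕ+ → ℂ) (T Tr D : H →L[ℂ] H)
    (hT : IsHankel T α) (hTr : IsHankel Tr fun n => (r : ℂ) ^ Om n * α n)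
    (hD : ∀ (a : H) (n : ℕ+), (D a : ℕ+ → ℂ) n = (r : ℂ) ^ Om n * a n) :
    Tr = D ∘L T ∘L D ∧ IsCompactOperator Tr ∧ ‖Tr‖ ≤ ‖T‖ := by
  have hrC : ∀ k : ℕ, ‖(r : ℂ) ^ k‖ = r ^ k := by
    intro k
    rw [norm_pow, Complex.norm_real, Real.norm_eq_abs, abs_of_pos hr0]
  -- `D` acts on basis vectors by scaling
  have hDsingle : ∀ n : ℕ+, D (lp.single 2 n 1) = ((r : ℂ) ^ Om n) • lp.single 2 n 1 := by
    intro n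
    apply lp.ext
    funext m
    rw [lp.coeFn_smul, Pi.smul_apply, smul_eq_mul]
    rcases eq_or_ne m n with hmn | hmn
    · subst hmn
      exact hD _ m
    · rw [hD, lp.single_apply_ne 2 n _ hmn, mul_zero, mul_zero]
  -- the operator identity
  have heq : Tr = D ∘L T ∘L D := by
    apply clm_ext_single
    intro n
    apply lp.ext
    funext m
    have h1 : ((D ∘L T ∘L D) (lp.single 2 n 1) : ℕ+ → ℂ) m
        = (r : ℂ) ^ Om m * ((r : ℂ) ^ Om n * α (n * m)) := by
      simp only [ContinuousLinearMap.comp_apply]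
      rw [hD, hDsingle, map_smul, lp.coeFn_smul, Pi.smul_apply, smul_eq_mul, hT]
    simp only [hTr n m, h1, Om_mul, pow_add]
    ring
  -- norm bound for D
  have hDnorm : ‖D‖ ≤ 1 := by
    refine ContinuousLinearMap.opNorm_le_bound D zero_le_one ?_
    intro a
    refine norm_le_of_coord (D a) a 1 zero_le_one ?_
    intro m
    rw [hD, norm_mul, one_mul, hrC]
    have h1 : r ^ Om m ≤ 1 := pow_le_one₀ hr0.le hr1.le
    nlinarith [norm_nonneg ((a : ℕ+ → ℂ) m), pow_nonneg hr0.le (Om m)]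
  -- finite rank approximations of D
  set F : ℕ → (H →L[ℂ] H) := fun k =>
    ∑ n ∈ (finite_sublevel k).toFinset, (evalCLM n).smulRight (D (lp.single 2 n 1)) with hF
  have hFcoord : ∀ (k : ℕ) (a : H) (m : ℕ+),
      ((F k) a : ℕ+ → ℂ) m
        = if m ∈ (finite_sublevel k).toFinset then (r : ℂ) ^ Om m * a m else 0 := by
    intro k a m
    rw [hF]
    simp only [ContinuousLinearMap.sum_apply, ContinuousLinearMap.smulRight_apply,
      evalCLM_apply]
    rw [lp.coeFn_sum, Finset.sum_apply]
    have hterm : ∀ n : ℕ+,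
        ((((a : ℕ+ → ℂ) n) • D (lp.single 2 n 1) : H) : ℕ+ → ℂ) m
          = if m = n then (r : ℂ) ^ Om m * a m else 0 := by
      intro n
      rw [lp.coeFn_smul, Pi.smul_apply, smul_eq_mul, hDsingle, lp.coeFn_smul,
        Pi.smul_apply, smul_eq_mul]
      rcases eq_or_ne m n with hmn | hmn
      · subst hmn
        rw [if_pos rfl, lp.single_apply_self]
        ring
      · rw [if_neg hmn, lp.single_apply_ne 2 n _ hmn]
        ring
    rw [Finset.sum_congr rfl fun n _ => hterm n]
    exact Finset.sum_ite_eq (finite_sublevel k).toFinset m _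
  -- each F k is compact
  have hFcompact : ∀ k, IsCompactOperator ⇑(F k) := by
    intro k
    exact isCompactOperator_sum _ _ fun n _ => isCompactOperator_smulRight _ _
  -- ‖D - F k‖ ≤ r ^ k
  have hFapprox : ∀ k, ‖D - F k‖ ≤ r ^ k := by
    intro k
    refine ContinuousLinearMap.opNorm_le_bound _ (pow_nonneg hr0.le k) ?_
    intro a
    refine norm_le_of_coord _ a _ (pow_nonneg hr0.le k) ?_
    intro m
    rw [ContinuousLinearMap.sub_apply, lp.coeFn_sub, Pi.sub_apply, hD, hFcoord]
    by_cases hm : m ∈ (finite_sublevel k).toFinset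
    · rw [if_pos hm, sub_self, norm_zero]
      positivity
    · rw [if_neg hm, sub_zero, norm_mul, hrC]
      have hOm : k ≤ Om m := by
        by_contra hc
        exact hm (by simp [Set.Finite.mem_toFinset]; omega)
      exact mul_le_mul_of_nonneg_right
        (pow_le_pow_of_le_one hr0.le hr1.le hOm) (norm_nonneg _)
  -- D is compact
  have hDcompact : IsCompactOperator ⇑D := by
    have htend : Filter.Tendsto F Filter.atTop (nhds D) := by
      rw [tendsto_iff_norm_sub_tendsto_zero]
      apply squeeze_zero (fun k => norm_nonneg _) (fun k => ?_)
        (tendsto_pow_atTop_nhds_zero_of_lt_one hr0.le hr1)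
      rw [← neg_sub, norm_neg]
      exact hFapprox k
    exact isCompactOperator_of_tendsto htend (Filter.Eventually.of_forall hFcompact)
  refine ⟨heq, ?_, ?_⟩
  · -- compactness of Tr
    rw [heq]
    have : ⇑(D ∘L T ∘L D) = ⇑D ∘ ⇑(T ∘L D) := rfl
    rw [this]
    exact hDcompact.comp_clm (T ∘L D)
  · -- norm bound
    rw [heq]
    calc ‖D ∘L T ∘L D‖ ≤ ‖D‖ * ‖T ∘L D‖ := ContinuousLinearMap.opNorm_comp_le _ _
      _ ≤ ‖D‖ * (‖T‖ * ‖D‖) := by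
          apply mul_le_mul_of_nonneg_left (ContinuousLinearMap.opNorm_comp_le _ _)
            (norm_nonneg _)
      _ ≤ 1 * (‖T‖ * 1) := by
          apply mul_le_mul hDnorm _ (by positivity) zero_le_one
          exact mul_le_mul_of_nonneg_left hDnorm (norm_nonneg _)
      _ = ‖T‖ := by ring
end
end

section
/- Let m** be a bounded functional on ℳ₀* (i.e. m** ∈ ℳ₀**) and set α = I**(m**) ∈ ℓ²(ℕ+), where I : ℳ₀ → ℓ² is the inclusion M(β) ↦ β. Then M(α) is a bounded multiplicative Hankel operator with ‖M(α)‖ ≤ ‖m**‖. -/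
open scoped ComplexConjugate

open scoped ENNReal

set_option synthInstance.maxHeartbeats 1000000
set_option maxHeartbeats 1000000

noncomputable section

/-- The topological dual `E →L[𝕜] 𝕜` of a normed space, as `NormedSpace.Dual` was defined in
older Mathlib (removed since; `StrongDual` takes only topological binders). -/
abbrev NormedSpace.Dual (𝕜 : Type*) [NontriviallyNormedField 𝕜] (E : Type*)
    [SeminormedAddCommGroup E] [NormedSpace 𝕜 E] : Type _ :=
  E →L[𝕜] 𝕜

instance NormedSpace.Dual.instSeminormedAddCommGroup (𝕜 : Type*) [NontriviallyNormedField 𝕜]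
    (E : Type*) [SeminormedAddCommGroup E] [NormedSpace 𝕜 E] :
    SeminormedAddCommGroup (NormedSpace.Dual 𝕜 E) :=
  ContinuousLinearMap.toSeminormedAddCommGroup

instance NormedSpace.Dual.instNormedSpace (𝕜 : Type*) [NontriviallyNormedField 𝕜]
    (E : Type*) [SeminormedAddCommGroup E] [NormedSpace 𝕜 E] :
    NormedSpace 𝕜 (NormedSpace.Dual 𝕜 E) :=
  ContinuousLinearMap.toNormedSpace

section Aux

lemma Haux.two_toReal : (2 : ℝ≥0∞).toReal = 2 := by norm_num

lemma Haux.summable_mul (x y : H) : Summable fun k => (x : ℕ+ → ℂ) k * (y : ℕ+ → ℂ) k := by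
  refine Summable.of_norm_bounded (g := fun k => ‖(x : ℕ+ → ℂ) k‖ * ‖(y : ℕ+ → ℂ) k‖)
    (lp.summable_mul ?_ x y) ?_
  · rw [Haux.two_toReal]; exact Real.HolderConjugate.two_two
  · intro k; rw [norm_mul]

lemma Haux.pair_eq_inner (x y : H) :
    (∑' k, (x : ℕ+ → ℂ) k * (y : ℕ+ → ℂ) k) = @inner ℂ _ _ (star x) y := by
  rw [lp.inner_eq_tsum]
  congr 1
  funext k
  rw [lp.star_apply, RCLike.inner_apply]
  simp
  ring

lemma Haux.norm_pair_le (x y : H) :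
    ‖∑' k, (x : ℕ+ → ℂ) k * (y : ℕ+ → ℂ) k‖ ≤ ‖x‖ * ‖y‖ := by
  rw [Haux.pair_eq_inner]
  calc ‖@inner ℂ _ _ (star x) y‖ ≤ ‖star x‖ * ‖y‖ := norm_inner_le_norm _ _
    _ = ‖x‖ * ‖y‖ := by rw [norm_star]

lemma Haux.memℓp_shift (n : ℕ+) (x : H) : Memℓp (fun m => (x : ℕ+ → ℂ) (n * m)) 2 := by
  apply memℓp_gen
  exact ((lp.memℓp x).summable (by rw [Haux.two_toReal]; norm_num)).comp_injective
    (mul_right_injective n)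

/-- `m ↦ x (n m)` as an element of `ℓ²`. -/
def Haux.shiftH (n : ℕ+) (x : H) : H := ⟨fun m => (x : ℕ+ → ℂ) (n * m), Haux.memℓp_shift n x⟩

lemma Haux.shiftH_coe (n : ℕ+) (x : H) :
    ((Haux.shiftH n x : H) : ℕ+ → ℂ) = fun m => (x : ℕ+ → ℂ) (n * m) := rfl

lemma Haux.mul_inj (n : ℕ+) : Function.Injective (fun m : ℕ+ => n * m) :=
  fun a b h => by exact mul_left_cancel h

/-- raw dilation: the sequence `k ↦ b (k / n)` if `n ∣ k`, else `0`. -/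
def Haux.dilFun (n : ℕ+) (b : H) : ℕ+ → ℂ := fun k =>
  if h : (n : ℕ) ∣ (k : ℕ) then
    (b : ℕ+ → ℂ) ⟨(k : ℕ) / (n : ℕ), Nat.div_pos (Nat.le_of_dvd k.pos h) n.pos⟩ else 0

lemma Haux.dilFun_mul (n m : ℕ+) (b : H) : Haux.dilFun n b (n * m) = (b : ℕ+ → ℂ) m := by
  have h : (n : ℕ) ∣ ((n * m : ℕ+) : ℕ) := by
    rw [PNat.mul_coe]; exact Dvd.intro m rfl
  rw [Haux.dilFun, dif_pos h]
  refine congr_arg (b : ℕ+ → ℂ) (Subtype.ext ?_)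
  show ((n * m : ℕ+) : ℕ) / (n : ℕ) = (m : ℕ)
  rw [PNat.mul_coe]
  exact Nat.mul_div_cancel_left _ n.pos

lemma Haux.dilFun_not_mem (n : ℕ+) (b : H) (k : ℕ+)
    (hk : k ∉ Set.range fun m : ℕ+ => n * m) : Haux.dilFun n b k = 0 := by
  rw [Haux.dilFun]
  apply dif_neg
  intro h
  apply hk
  refine ⟨⟨(k : ℕ) / (n : ℕ), Nat.div_pos (Nat.le_of_dvd k.pos h) n.pos⟩, ?_⟩
  apply Subtype.ext
  show ((n * ⟨(k : ℕ) / (n : ℕ), Nat.div_pos (Nat.le_of_dvd k.pos h) n.pos⟩ : ℕ+) : ℕ) = (k : ℕ)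
  show (n : ℕ) * ((k : ℕ) / (n : ℕ)) = (k : ℕ)
  exact Nat.mul_div_cancel' h

lemma Haux.memℓp_dil (n : ℕ+) (b : H) : Memℓp (Haux.dilFun n b) 2 := by
  apply memℓp_gen
  rw [show (2 : ℝ≥0∞).toReal = 2 from Haux.two_toReal]
  have hinj := Haux.mul_inj n
  refine (Function.Injective.summable_iff hinj ?_).mp ?_
  · intro k hk
    rw [Haux.dilFun_not_mem n b k hk]
    simp
  · have : Summable fun m => ‖(b : ℕ+ → ℂ) m‖ ^ (2 : ℝ) := by
      have := (lp.memℓp b).summable (p := 2) (by rw [Haux.two_toReal]; norm_num)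
      rwa [Haux.two_toReal] at this
    refine this.congr fun m => ?_
    simp [Function.comp, Haux.dilFun_mul]

/-- dilation as an element of `ℓ²`. -/
def Haux.dilH (n : ℕ+) (b : H) : H := ⟨Haux.dilFun n b, Haux.memℓp_dil n b⟩

lemma Haux.dilH_coe (n : ℕ+) (b : H) : ((Haux.dilH n b : H) : ℕ+ → ℂ) = Haux.dilFun n b := rfl

lemma Haux.tsum_dil (n : ℕ+) (b : H) (x : ℕ+ → ℂ) :
    ∑' k, x k * (Haux.dilH n b : ℕ+ → ℂ) k = ∑' m, x (n * m) * (b : ℕ+ → ℂ) m := by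
  have hsupp : Function.support (fun k => x k * Haux.dilFun n b k) ⊆
      Set.range fun m : ℕ+ => n * m := by
    intro k hk
    by_contra hkr
    refine hk ?_
    show x k * Haux.dilFun n b k = 0
    rw [Haux.dilFun_not_mem n b k hkr, mul_zero]
  have h := Function.Injective.tsum_eq (Haux.mul_inj n)
    (f := fun k => x k * Haux.dilFun n b k) hsupp
  rw [Haux.dilH_coe, ← h]
  congr 1
  funext m
  show x (n * m) * Haux.dilFun n b (n * m) = x (n * m) * (b : ℕ+ → ℂ) m
  rw [Haux.dilFun_mul]

end Aux

/-- if `m** ∈ ℳ₀**` and `α = I**(m**) ∈ ℓ²(ℕ+)` (characterized by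
`m**(I* a) = (α, a) = ∑ α(n) a(n)` for all `a ∈ ℓ²`, where `I* a` is the functional
`T ↦ (I T, a)` on `ℳ₀`), then `M(α)` is bounded with `‖M(α)‖ ≤ ‖m**‖`. -/
theorem bidual_image_is_bounded_hankel
    (S₀ : Submodule ℂ (H →L[ℂ] H))
    (hS₀ : (S₀ : Set (H →L[ℂ] H)) = {T | (∃ α, IsHankel T α) ∧ IsCompactOperator T})
    (I : ↥S₀ →L[ℂ] H)
    (hI : ∀ (T : ↥S₀) (α : ℕ+ → ℂ), IsHankel T.val α → ((I T : ℕ+ → ℂ) = α))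
    (mss : NormedSpace.Dual ℂ (NormedSpace.Dual ℂ ↥S₀))
    (α : ℕ+ → ℂ) (hα : Memℓp α 2)
    (hpair : ∀ (a : H) (φ : NormedSpace.Dual ℂ ↥S₀),
      (∀ T : ↥S₀, φ T = ∑' n : ℕ+, (I T : ℕ+ → ℂ) n * a n) →
      mss φ = ∑' n : ℕ+, α n * a n) :
    ∃ T : H →L[ℂ] H, IsHankel T α ∧ ‖T‖ ≤ ‖mss‖ := by
  classical
  set C := ‖mss‖ with hCdef
  have hC0 : 0 ≤ C := norm_nonneg _
  set αH : H := ⟨α, hα⟩ with hαH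
  have hαH_coe : (αH : ℕ+ → ℂ) = α := rfl
  -- every element of S₀ is Hankel with symbol `I T`
  have hHank : ∀ T : ↥S₀, IsHankel T.val (I T : ℕ+ → ℂ) := by
    intro T
    have hT : T.val ∈ (S₀ : Set (H →L[ℂ] H)) := T.2
    rw [hS₀] at hT
    obtain ⟨⟨β, hβ⟩, -⟩ := hT
    intro n m
    rw [hI T β hβ]
    exact hβ n m
  -- the key estimate
  have key : ∀ (b : H) (s : Finset ℕ+) (a : ℕ+ → ℂ),
      ‖∑ n ∈ s, a n * ∑' m, α (n * m) * (b : ℕ+ → ℂ) m‖ ≤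
        C * ‖∑ n ∈ s, lp.single 2 n (a n)‖ * ‖b‖ := by
    intro b s a
    set aH : H := ∑ n ∈ s, lp.single 2 n (a n) with haHdef
    set c : H := ∑ n ∈ s, a n • Haux.dilH n b with hcdef
    have hc_coord : ∀ k, (c : ℕ+ → ℂ) k = ∑ n ∈ s, a n * (Haux.dilH n b : ℕ+ → ℂ) k := by
      intro k
      rw [hcdef, lp.coeFn_sum]
      simp [Finset.sum_apply]
    -- pairing any ℓ² sequence against `c`
    have hpairc : ∀ x : H, (∑' k, (x : ℕ+ → ℂ) k * (c : ℕ+ → ℂ) k)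
        = ∑ n ∈ s, a n * ∑' m, (x : ℕ+ → ℂ) (n * m) * (b : ℕ+ → ℂ) m := by
      intro x
      calc (∑' k, (x : ℕ+ → ℂ) k * (c : ℕ+ → ℂ) k)
          = ∑' k, ∑ n ∈ s, a n * ((x : ℕ+ → ℂ) k * (Haux.dilH n b : ℕ+ → ℂ) k) := by
            congr 1
            funext k
            rw [hc_coord k, Finset.mul_sum]
            refine Finset.sum_congr rfl fun n _ => by ring
        _ = ∑ n ∈ s, ∑' k, a n * ((x : ℕ+ → ℂ) k * (Haux.dilH n b : ℕ+ → ℂ) k) := by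
            refine Summable.tsum_finsetSum fun n _ => ?_
            exact (Haux.summable_mul x (Haux.dilH n b)).mul_left _
        _ = ∑ n ∈ s, a n * ∑' m, (x : ℕ+ → ℂ) (n * m) * (b : ℕ+ → ℂ) m := by
            refine Finset.sum_congr rfl fun n _ => ?_
            rw [tsum_mul_left, Haux.tsum_dil]
    -- coordinates of `T aH`
    have haH_coord : ∀ (T : ↥S₀) (m : ℕ+),
        (T.val aH : ℕ+ → ℂ) m = ∑ n ∈ s, a n * (I T : ℕ+ → ℂ) (n * m) := by
      intro T m
      have h1 : T.val aH = ∑ n ∈ s, a n • T.val (lp.single 2 n (1 : ℂ)) := by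
        rw [haHdef, map_sum]
        refine Finset.sum_congr rfl fun n _ => ?_
        calc T.val (lp.single 2 n (a n)) = T.val (a n • lp.single 2 n (1 : ℂ)) := by
              congr 1
              rw [← lp.single_smul]
              congr 1
              simp
          _ = a n • T.val (lp.single 2 n (1 : ℂ)) := map_smul _ _ _
      rw [h1, lp.coeFn_sum]
      rw [Finset.sum_apply]
      refine Finset.sum_congr rfl fun n _ => ?_
      rw [lp.coeFn_smul, Pi.smul_apply, smul_eq_mul, hHank T n m]
    -- the functional value in two ways
    have hφval : ∀ T : ↥S₀, (∑' k, (I T : ℕ+ → ℂ) k * (c : ℕ+ → ℂ) k)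
        = ∑' m, (T.val aH : ℕ+ → ℂ) m * (b : ℕ+ → ℂ) m := by
      intro T
      rw [hpairc (I T)]
      have : (∑' m, (T.val aH : ℕ+ → ℂ) m * (b : ℕ+ → ℂ) m)
          = ∑' m, ∑ n ∈ s, a n *
              ((Haux.shiftH n (I T) : ℕ+ → ℂ) m * (b : ℕ+ → ℂ) m) := by
        congr 1
        funext m
        rw [haH_coord T m, Finset.sum_mul]
        refine Finset.sum_congr rfl fun n _ => ?_
        rw [Haux.shiftH_coe]
        ring
      rw [this, Summable.tsum_finsetSum fun n _ => ((Haux.summable_mul (Haux.shiftH n (I T)) b).mul_left _)]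
      refine Finset.sum_congr rfl fun n _ => ?_
      rw [tsum_mul_left]
      rfl
    -- define the functional φ = ⟪star c, I ·⟫
    set φ : NormedSpace.Dual ℂ ↥S₀ := ((innerSL ℂ (star c)).comp I) with hφdef
    have hφ : ∀ T : ↥S₀, φ T = ∑' k, (I T : ℕ+ → ℂ) k * (c : ℕ+ → ℂ) k := by
      intro T
      have h2 := Haux.pair_eq_inner c (I T)
      rw [hφdef, ContinuousLinearMap.comp_apply, innerSL_apply_apply, ← h2]
      congr 1
      funext k
      ring
    have hφnorm : ‖φ‖ ≤ ‖aH‖ * ‖b‖ := by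
      refine ContinuousLinearMap.opNorm_le_bound _ (by positivity) fun T => ?_
      rw [hφ T, hφval T]
      calc ‖∑' m, (T.val aH : ℕ+ → ℂ) m * (b : ℕ+ → ℂ) m‖
          ≤ ‖T.val aH‖ * ‖b‖ := Haux.norm_pair_le _ _
        _ ≤ (‖T.val‖ * ‖aH‖) * ‖b‖ := by
            gcongr
            exact (T.val).le_opNorm aH
        _ = ‖aH‖ * ‖b‖ * ‖T‖ := by rw [show ‖T.val‖ = ‖T‖ from rfl]; ring
    have hmssφ : mss φ = ∑ n ∈ s, a n * ∑' m, α (n * m) * (b : ℕ+ → ℂ) m := by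
      rw [hpair c φ hφ]
      have := hpairc αH
      rw [hαH_coe] at this
      exact this
    rw [← hmssφ]
    calc ‖mss φ‖ ≤ ‖mss‖ * ‖φ‖ := mss.le_opNorm φ
      _ ≤ C * (‖aH‖ * ‖b‖) := mul_le_mul_of_nonneg_left hφnorm hC0
      _ = C * ‖aH‖ * ‖b‖ := by ring
  -- the candidate sequence for T b
  set u : H → ℕ+ → ℂ := fun b n => ∑' m, α (n * m) * (b : ℕ+ → ℂ) m with hudef
  -- partial sum bound
  have husum : ∀ (b : H) (s : Finset ℕ+),
      ∑ n ∈ s, ‖u b n‖ ^ (2 : ℝ) ≤ (C * ‖b‖) ^ (2 : ℝ) := by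
    intro b s
    have h1 := key b s (fun n => conj (u b n))
    have h2 : (∑ n ∈ s, conj (u b n) * u b n) = ((∑ n ∈ s, ‖u b n‖ ^ (2 : ℝ) : ℝ) : ℂ) := by
      push_cast
      refine Finset.sum_congr rfl fun n _ => ?_
      rw [show ‖u b n‖ ^ (2 : ℝ) = ‖u b n‖ ^ (2 : ℕ) by
        rw [← Real.rpow_natCast]; norm_num]
      rw [RCLike.conj_mul]
      norm_cast
    rw [h2] at h1
    have h3 : ‖((∑ n ∈ s, ‖u b n‖ ^ (2 : ℝ) : ℝ) : ℂ)‖ = ∑ n ∈ s, ‖u b n‖ ^ (2 : ℝ) := by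
      rw [Complex.norm_real, Real.norm_of_nonneg]
      exact Finset.sum_nonneg fun n _ => Real.rpow_nonneg (norm_nonneg _) _
    rw [h3] at h1
    have h4 : ‖∑ n ∈ s, lp.single 2 n (conj (u b n))‖ ^ (2 : ℝ)
        = ∑ n ∈ s, ‖u b n‖ ^ (2 : ℝ) := by
      have := lp.norm_sum_single (p := 2) (E := fun _ : ℕ+ => ℂ)
        (by rw [Haux.two_toReal]; norm_num) (fun n => conj (u b n)) s
      rw [Haux.two_toReal] at this
      rw [this]
      refine Finset.sum_congr rfl fun n _ => ?_
      rw [RCLike.norm_conj]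
    set S : ℝ := ∑ n ∈ s, ‖u b n‖ ^ (2 : ℝ) with hSdef
    set x : ℝ := ‖∑ n ∈ s, lp.single 2 n (conj (u b n))‖ with hxdef
    have hx0 : 0 ≤ x := norm_nonneg _
    have hb0 : 0 ≤ ‖b‖ := norm_nonneg _
    have hx2 : x ^ (2 : ℝ) = S := h4
    have hx2' : x ^ 2 = S := by
      rw [← hx2, ← Real.rpow_natCast]; norm_num
    have hK0 : 0 ≤ C * ‖b‖ := mul_nonneg hC0 hb0
    rw [show ((C * ‖b‖) ^ (2 : ℝ) : ℝ) = (C * ‖b‖) ^ 2 by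
      rw [← Real.rpow_natCast]; norm_num]
    -- h1 : S ≤ C * x * ‖b‖
    rcases eq_or_lt_of_le hx0 with hx00 | hxpos
    · have hS0 : S = 0 := by rw [← hx2', ← hx00]; ring
      rw [hS0]
      positivity
    · have hxK : x ≤ C * ‖b‖ := by
        have hxx : x * x ≤ (C * ‖b‖) * x := by
          have hxs : x * x = S := by rw [← hx2']; ring
          rw [hxs]
          calc S ≤ C * x * ‖b‖ := h1
            _ = (C * ‖b‖) * x := by ring
        exact le_of_mul_le_mul_right hxx hxpos
      calc S = x ^ 2 := hx2'.symm
        _ ≤ (C * ‖b‖) ^ 2 := by gcongr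
  have hmem : ∀ b : H, Memℓp (u b) 2 := by
    intro b
    refine memℓp_gen' (C := (C * ‖b‖) ^ (2 : ℝ)) fun s => ?_
    rw [Haux.two_toReal]
    exact husum b s
  have hbound : ∀ b : H, ‖(⟨u b, hmem b⟩ : H)‖ ≤ C * ‖b‖ := by
    intro b
    refine lp.norm_le_of_forall_sum_le (by rw [Haux.two_toReal]; norm_num)
      (mul_nonneg hC0 (norm_nonneg _)) fun s => ?_
    rw [Haux.two_toReal]
    exact husum b s
  -- summability of the defining series, for linearity
  have husummable : ∀ (b : H) (n : ℕ+),
      Summable fun m => α (n * m) * (b : ℕ+ → ℂ) m :=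
    fun b n => Haux.summable_mul (Haux.shiftH n αH) b
  set Tl : H →ₗ[ℂ] H :=
    { toFun := fun b => ⟨u b, hmem b⟩
      map_add' := by
        intro b b'
        apply lp.ext
        funext n
        show u (b + b') n = u b n + u b' n
        rw [hudef]
        simp only
        rw [← Summable.tsum_add (husummable b n) (husummable b' n)]
        congr 1
        funext m
        rw [lp.coeFn_add, Pi.add_apply]
        ring
      map_smul' := by
        intro z b
        apply lp.ext
        funext n
        show u (z • b) n = z * u b n
        rw [hudef]
        simp only
        rw [← tsum_mul_left]
        congr 1
        funext m
        rw [lp.coeFn_smul, Pi.smul_apply, smul_eq_mul]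
        ring } with hTldef
  refine ⟨Tl.mkContinuous C hbound, ?_, ?_⟩
  · intro n m
    show u (lp.single 2 n 1) m = α (n * m)
    rw [hudef]
    simp only
    rw [tsum_eq_single n ?_]
    · rw [lp.single_apply_self, mul_one, mul_comm]
    · intro k hk
      rw [lp.single_apply_ne 2 n 1 hk, mul_zero]
  · exact Tl.mkContinuous_norm_le hC0 hbound
end
end

section
/- Let 𝒳 be the completion of the space X of finite sums of Dirichlet convolutions of finite sequences with the projective norm. For each bounded multiplicative Hankel operator m = M(α), the functional Jm(c) = ∑_n α(n) c(n) on X extends to 𝒳 with ‖Jm‖_{𝒳*} = ‖M(α)‖, and J : ℳ → 𝒳* is an isometric isomorphism onto 𝒳*. -/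
open scoped ComplexConjugate

noncomputable section
set_option maxHeartbeats 2000000

/-- extend a sequence on ℕ+ to ℕ by zero -/
def ext (a : ℕ+ → ℂ) : ℕ → ℂ := fun n => if h : 0 < n then a ⟨n, h⟩ else 0

/-- Dirichlet convolution with conjugation in the second argument -/
def dConv (a b : ℕ+ → ℂ) : ℕ+ → ℂ := fun n =>
  ∑ k ∈ (n : ℕ).divisors, ext a k * conj (ext b ((n : ℕ) / k))

/-- the ℓ² norm of a sequence -/
def l2norm (a : ℕ+ → ℂ) : ℝ := Real.sqrt (∑' n, ‖a n‖ ^ 2)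

/-- `L` is a representation of `c` as a finite sum of Dirichlet convolutions of
finitely supported sequences. -/
def XRep (c : ℕ+ → ℂ) (L : List ((ℕ+ → ℂ) × (ℕ+ → ℂ))) : Prop :=
  (∀ p ∈ L, (Function.support p.1).Finite ∧ (Function.support p.2).Finite) ∧
  c = fun n => (L.map fun p => dConv p.1 p.2 n).sum

/-- the space `X` of finite sums of Dirichlet convolutions of finite sequences -/
def XSet : Set (ℕ+ → ℂ) := {c | ∃ L, XRep c L}

/-- the projective norm on `X`:
`‖c‖_X = inf ∑_k ‖a_k‖_{ℓ²} ‖b_k‖_{ℓ²}` over all finite representations of `c`. -/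
def normX (c : ℕ+ → ℂ) : ℝ :=
  sInf {x | ∃ L, XRep c L ∧ x = (L.map fun p => l2norm p.1 * l2norm p.2).sum}

namespace HPD
open scoped ENNReal

lemma ext_coe (a : ℕ+ → ℂ) (d : ℕ+) : ext a (d : ℕ) = a d := by
  have h : 0 < (d : ℕ) := d.pos
  simp only [ext, dif_pos h]
  congr 1

lemma ext_eq_zero (a : ℕ+ → ℂ) {Sa : Finset ℕ+} (hSa : Function.support a ⊆ ↑Sa)
    {k : ℕ} (hk : 0 < k) (h : (⟨k, hk⟩ : ℕ+) ∉ Sa) : ext a k = 0 := by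
  simp only [ext, dif_pos hk]
  by_contra hne
  exact h (hSa hne)

/-- Claim A'': dConv as a double sum over supports -/
lemma dConv_eq_sum (a b : ℕ+ → ℂ) {Sa Sb : Finset ℕ+}
    (hSa : Function.support a ⊆ ↑Sa) (hSb : Function.support b ⊆ ↑Sb) (n : ℕ+) :
    dConv a b n = ∑ d ∈ Sa, ∑ m ∈ Sb, if d * m = n then a d * conj (b m) else 0 := by
  classical
  have hrhs : (∑ d ∈ Sa, ∑ m ∈ Sb, if d * m = n then a d * conj (b m) else 0)
      = ∑ p ∈ (Sa ×ˢ Sb).filter (fun p => p.1 * p.2 = n), a p.1 * conj (b p.2) := by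
    rw [Finset.sum_filter, Finset.sum_product]
  rw [hrhs]
  have hlhs : dConv a b n = ∑ p ∈ (n : ℕ).divisorsAntidiagonal, ext a p.1 * conj (ext b p.2) := by
    rw [dConv, ← Nat.sum_divisorsAntidiagonal (fun i j => ext a i * conj (ext b j))]
  rw [hlhs]
  set F := (Sa ×ˢ Sb).filter (fun p => p.1 * p.2 = n) with hF
  set φ : ℕ+ × ℕ+ → ℕ × ℕ := fun p => ((p.1 : ℕ), (p.2 : ℕ)) with hφ
  have hsub : F.image φ ⊆ (n : ℕ).divisorsAntidiagonal := by
    intro q hq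
    simp only [Finset.mem_image] at hq
    obtain ⟨p, hp, rfl⟩ := hq
    rw [hF, Finset.mem_filter] at hp
    rw [Nat.mem_divisorsAntidiagonal]
    constructor
    · rw [hφ]; dsimp only
      rw [← PNat.mul_coe, hp.2]
    · exact n.ne_zero
  have hvanish : ∀ q ∈ (n : ℕ).divisorsAntidiagonal, q ∉ F.image φ →
      ext a q.1 * conj (ext b q.2) = 0 := by
    intro q hq hnot
    rw [Nat.mem_divisorsAntidiagonal] at hq
    have h1 : 0 < q.1 := Nat.pos_of_ne_zero (by intro h0; rw [h0, zero_mul] at hq; exact hq.2 hq.1.symm)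
    have h2 : 0 < q.2 := Nat.pos_of_ne_zero (by intro h0; rw [h0, mul_zero] at hq; exact hq.2 hq.1.symm)
    by_contra hne
    have ha : a ⟨q.1, h1⟩ ≠ 0 := by
      intro h0
      apply hne
      simp only [ext, dif_pos h1, h0, zero_mul]
    have hb : b ⟨q.2, h2⟩ ≠ 0 := by
      intro h0
      apply hne
      simp only [ext, dif_pos h2, h0, map_zero, mul_zero]
    apply hnot
    rw [Finset.mem_image]
    refine ⟨(⟨q.1, h1⟩, ⟨q.2, h2⟩), ?_, rfl⟩
    rw [hF, Finset.mem_filter]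
    refine ⟨Finset.mem_product.2 ⟨hSa ha, hSb hb⟩, ?_⟩
    · apply PNat.coe_injective
      rw [PNat.mul_coe]
      exact hq.1
  rw [← Finset.sum_subset hsub hvanish]
  rw [Finset.sum_image (by
    intro p _ q _ hpq
    have h1 : (p.1 : ℕ) = q.1 := congrArg Prod.fst hpq
    have h2 : (p.2 : ℕ) = q.2 := congrArg Prod.snd hpq
    exact Prod.ext (PNat.coe_injective h1) (PNat.coe_injective h2))]
  apply Finset.sum_congr rfl
  intro p _
  rw [hφ]; dsimp only
  rw [ext_coe, ext_coe]


/-- indicator sequence -/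
def chi (n : ℕ+) : ℕ+ → ℂ := fun m => if m = n then 1 else 0

lemma chi_support (n : ℕ+) : Function.support (chi n) ⊆ ↑({n} : Finset ℕ+) := by
  intro m hm
  simp only [Function.mem_support, chi] at hm
  simp only [Finset.coe_singleton, Set.mem_singleton_iff]
  by_contra h
  exact hm (if_neg h)

lemma chi_support_finite (n : ℕ+) : (Function.support (chi n)).Finite :=
  Set.Finite.subset (Finset.finite_toSet _) (chi_support n)

lemma dConv_support (a b : ℕ+ → ℂ) {Sa Sb : Finset ℕ+}
    (hSa : Function.support a ⊆ ↑Sa) (hSb : Function.support b ⊆ ↑Sb) :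
    Function.support (dConv a b) ⊆ ↑((Sa ×ˢ Sb).image (fun p => p.1 * p.2)) := by
  intro n hn
  simp only [Function.mem_support] at hn
  rw [dConv_eq_sum a b hSa hSb n] at hn
  by_contra h
  apply hn
  apply Finset.sum_eq_zero
  intro d hd
  apply Finset.sum_eq_zero
  intro m hm
  rw [if_neg]
  intro heq
  apply h
  simp only [Finset.coe_image, Set.mem_image, Finset.mem_coe, Finset.mem_product]
  exact ⟨(d, m), ⟨hd, hm⟩, heq⟩

lemma dConv_support_finite {a b : ℕ+ → ℂ} (ha : (Function.support a).Finite)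
    (hb : (Function.support b).Finite) : (Function.support (dConv a b)).Finite :=
  Set.Finite.subset (Finset.finite_toSet _)
    (dConv_support a b ha.coe_toFinset.symm.subset hb.coe_toFinset.symm.subset)

/-- tsum of a function vanishing outside a finset -/
lemma tsum_eq_finsum {f : ℕ+ → ℂ} {S : Finset ℕ+} (h : Function.support f ⊆ ↑S) :
    ∑' n, f n = ∑ n ∈ S, f n := by
  apply tsum_eq_sum
  intro n hn
  by_contra h0
  exact hn (h h0)

/-- Claim A': the bilinear pairing formula -/
lemma pairing_eq (α a b : ℕ+ → ℂ) {Sa Sb : Finset ℕ+}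
    (hSa : Function.support a ⊆ ↑Sa) (hSb : Function.support b ⊆ ↑Sb) :
    ∑' n, α n * dConv a b n
      = ∑ d ∈ Sa, ∑ m ∈ Sb, α (d * m) * (a d * conj (b m)) := by
  classical
  set S := (Sa ×ˢ Sb).image (fun p : ℕ+ × ℕ+ => p.1 * p.2) with hS
  have hsupp : Function.support (fun n => α n * dConv a b n) ⊆ ↑S := by
    intro n hn
    simp only [Function.mem_support] at hn
    have : dConv a b n ≠ 0 := by
      intro h0; apply hn; rw [h0, mul_zero]
    exact dConv_support a b hSa hSb this
  rw [tsum_eq_finsum hsupp]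
  have key : ∀ n ∈ S, α n * dConv a b n
      = ∑ d ∈ Sa, ∑ m ∈ Sb, if d * m = n then α (d * m) * (a d * conj (b m)) else 0 := by
    intro n _
    rw [dConv_eq_sum a b hSa hSb n, Finset.mul_sum]
    apply Finset.sum_congr rfl
    intro d _
    rw [Finset.mul_sum]
    apply Finset.sum_congr rfl
    intro m _
    rw [mul_ite, mul_zero]
    by_cases h : d * m = n
    · rw [if_pos h, if_pos h, h]
    · rw [if_neg h, if_neg h]
  rw [Finset.sum_congr rfl key, Finset.sum_comm]
  apply Finset.sum_congr rfl
  intro d hd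
  rw [Finset.sum_comm]
  apply Finset.sum_congr rfl
  intro m hm
  have hmem : d * m ∈ S := by
    rw [hS]
    exact Finset.mem_image.2 ⟨(d, m), Finset.mem_product.2 ⟨hd, hm⟩, rfl⟩
  rw [Finset.sum_ite_eq S (d * m) (fun _ => α (d * m) * (a d * conj (b m))), if_pos hmem]

lemma dConv_chi (n m : ℕ+) : dConv (chi n) (chi m) = chi (n * m) := by
  funext k
  rw [dConv_eq_sum (chi n) (chi m) (chi_support n) (chi_support m) k]
  have h1 : chi n n = 1 := if_pos rfl
  have h2 : chi m m = 1 := if_pos rfl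
  rw [Finset.sum_singleton, Finset.sum_singleton, h1, h2, map_one, mul_one]
  show _ = chi (n * m) k
  unfold chi
  by_cases h : n * m = k
  · rw [if_pos h, if_pos h.symm]
  · rw [if_neg h, if_neg fun hh => h hh.symm]


lemma ext_add (a a' : ℕ+ → ℂ) (k : ℕ) : ext (a + a') k = ext a k + ext a' k := by
  unfold ext
  by_cases h : 0 < k
  · rw [dif_pos h, dif_pos h, dif_pos h]; rfl
  · rw [dif_neg h, dif_neg h, dif_neg h, add_zero]

lemma ext_smul (s : ℂ) (a : ℕ+ → ℂ) (k : ℕ) : ext (s • a) k = s * ext a k := by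
  unfold ext
  by_cases h : 0 < k
  · rw [dif_pos h, dif_pos h]; rfl
  · rw [dif_neg h, dif_neg h, mul_zero]

lemma dConv_add_left (a a' b : ℕ+ → ℂ) : dConv (a + a') b = dConv a b + dConv a' b := by
  funext n
  show dConv (a + a') b n = dConv a b n + dConv a' b n
  unfold dConv
  rw [← Finset.sum_add_distrib]
  apply Finset.sum_congr rfl
  intro k _
  rw [ext_add, add_mul]

lemma dConv_add_right (a b b' : ℕ+ → ℂ) : dConv a (b + b') = dConv a b + dConv a b' := by
  funext n
  show dConv a (b + b') n = dConv a b n + dConv a b' n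
  unfold dConv
  rw [← Finset.sum_add_distrib]
  apply Finset.sum_congr rfl
  intro k _
  rw [ext_add, map_add, mul_add]

lemma dConv_smul_left (s : ℂ) (a b : ℕ+ → ℂ) : dConv (s • a) b = s • dConv a b := by
  funext n
  show dConv (s • a) b n = s * dConv a b n
  unfold dConv
  rw [Finset.mul_sum]
  apply Finset.sum_congr rfl
  intro k _
  rw [ext_smul, mul_assoc]

lemma dConv_smul_right (s : ℂ) (a b : ℕ+ → ℂ) :
    dConv a (s • b) = (conj s) • dConv a b := by
  funext n
  show dConv a (s • b) n = conj s * dConv a b n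
  unfold dConv
  rw [Finset.mul_sum]
  apply Finset.sum_congr rfl
  intro k _
  rw [ext_smul, map_mul]
  ring


-- ## XSet machinery

lemma zero_mem_XSet : (0 : ℕ+ → ℂ) ∈ XSet := by
  refine ⟨[], ?_, ?_⟩
  · intro p hp; cases hp
  · funext n; simp

lemma dConv_mem_XSet {a b : ℕ+ → ℂ} (ha : (Function.support a).Finite)
    (hb : (Function.support b).Finite) : dConv a b ∈ XSet := by
  refine ⟨[(a, b)], ?_, ?_⟩
  · intro p hp
    rw [List.mem_singleton] at hp
    subst hp; exact ⟨ha, hb⟩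
  · funext n; simp

lemma chi_mem_XSet (n : ℕ+) : chi n ∈ XSet := by
  have := dConv_mem_XSet (chi_support_finite n) (chi_support_finite 1)
  rwa [dConv_chi, mul_one] at this

lemma XRep_add {c c' : ℕ+ → ℂ} {L L' : List ((ℕ+ → ℂ) × (ℕ+ → ℂ))}
    (h : XRep c L) (h' : XRep c' L') : XRep (c + c') (L ++ L') := by
  constructor
  · intro p hp
    rcases List.mem_append.1 hp with hp | hp
    · exact h.1 p hp
    · exact h'.1 p hp
  · funext n
    show c n + c' n = _
    rw [h.2, h'.2]
    simp [List.map_append, List.sum_append]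

lemma add_mem_XSet {c c' : ℕ+ → ℂ} (h : c ∈ XSet) (h' : c' ∈ XSet) : c + c' ∈ XSet := by
  obtain ⟨L, hL⟩ := h
  obtain ⟨L', hL'⟩ := h'
  exact ⟨L ++ L', XRep_add hL hL'⟩

lemma XRep_smul {c : ℕ+ → ℂ} {L : List ((ℕ+ → ℂ) × (ℕ+ → ℂ))} (s : ℂ)
    (h : XRep c L) : XRep (s • c) (L.map fun p => (s • p.1, p.2)) := by
  constructor
  · intro p hp
    rw [List.mem_map] at hp
    obtain ⟨q, hq, rfl⟩ := hp
    refine ⟨?_, (h.1 q hq).2⟩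
    apply Set.Finite.subset (h.1 q hq).1
    intro x hx
    simp only [Function.mem_support, Pi.smul_apply, smul_eq_mul] at hx ⊢
    intro h0
    exact hx (by rw [h0, mul_zero])
  · funext n
    show s * c n = _
    rw [h.2]
    dsimp only
    clear h
    induction L with
    | nil => simp
    | cons p L ih =>
      simp only [List.map_cons, List.sum_cons, mul_add]
      rw [ih, dConv_smul_left]
      rfl

lemma smul_mem_XSet {c : ℕ+ → ℂ} (s : ℂ) (h : c ∈ XSet) : s • c ∈ XSet := by
  obtain ⟨L, hL⟩ := h
  exact ⟨_, XRep_smul s hL⟩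

lemma XSet_support_finite {c : ℕ+ → ℂ} (h : c ∈ XSet) : (Function.support c).Finite := by
  obtain ⟨L, hL, hc⟩ := h
  subst hc
  induction L with
  | nil => simp
  | cons p L ih =>
    have h1 : (Function.support (dConv p.1 p.2)).Finite :=
      dConv_support_finite (hL p List.mem_cons_self).1 (hL p List.mem_cons_self).2
    have h2 := ih (fun q hq => hL q (List.mem_cons_of_mem p hq))
    apply Set.Finite.subset (h1.union h2)
    intro n hn
    simp only [Function.mem_support, List.map_cons, List.sum_cons] at hn
    by_cases hd : dConv p.1 p.2 n = 0
    · right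
      simp only [Function.mem_support]
      intro h0
      rw [hd, h0, add_zero] at hn
      exact hn rfl
    · left; exact hd

-- ## normX facts

lemma l2norm_nonneg (a : ℕ+ → ℂ) : 0 ≤ l2norm a := Real.sqrt_nonneg _

lemma normX_set_nonneg (c : ℕ+ → ℂ) :
    ∀ x ∈ {x | ∃ L, XRep c L ∧ x = (L.map fun p => l2norm p.1 * l2norm p.2).sum}, (0:ℝ) ≤ x := by
  rintro x ⟨L, _, rfl⟩
  apply List.sum_nonneg
  intro y hy
  rw [List.mem_map] at hy
  obtain ⟨p, _, rfl⟩ := hy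
  exact mul_nonneg (l2norm_nonneg _) (l2norm_nonneg _)

lemma normX_bddBelow (c : ℕ+ → ℂ) :
    BddBelow {x | ∃ L, XRep c L ∧ x = (L.map fun p => l2norm p.1 * l2norm p.2).sum} :=
  ⟨0, fun x hx => normX_set_nonneg c x hx⟩

lemma normX_nonneg (c : ℕ+ → ℂ) (h : c ∈ XSet) : 0 ≤ normX c := by
  obtain ⟨L, hL⟩ := h
  exact le_csInf ⟨_, L, hL, rfl⟩ (normX_set_nonneg c)

lemma normX_le_of_rep {c : ℕ+ → ℂ} {L : List ((ℕ+ → ℂ) × (ℕ+ → ℂ))} (h : XRep c L) :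
    normX c ≤ (L.map fun p => l2norm p.1 * l2norm p.2).sum :=
  csInf_le (normX_bddBelow c) ⟨L, h, rfl⟩

lemma normX_dConv_le {a b : ℕ+ → ℂ} (ha : (Function.support a).Finite)
    (hb : (Function.support b).Finite) : normX (dConv a b) ≤ l2norm a * l2norm b := by
  have h : XRep (dConv a b) [(a, b)] := by
    constructor
    · intro p hp
      rw [List.mem_singleton] at hp
      subst hp; exact ⟨ha, hb⟩
    · funext n; simp
  simpa using normX_le_of_rep h

lemma normX_zero : normX 0 = 0 := by
  have h : XRep (0 : ℕ+ → ℂ) [] := by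
    constructor
    · intro p hp; cases hp
    · funext n; simp
  have := normX_le_of_rep h
  simp only [List.map_nil, List.sum_nil] at this
  exact le_antisymm this (normX_nonneg 0 zero_mem_XSet)


-- ## lp embedding

lemma memℓp_of_finite {a : ℕ+ → ℂ} (ha : (Function.support a).Finite) :
    Memℓp a 2 := by
  apply memℓp_gen
  apply summable_of_ne_finset_zero (s := ha.toFinset)
  intro n hn
  have : a n = 0 := by
    by_contra h0
    exact hn (ha.mem_toFinset.2 h0)
  rw [this]
  simp [Real.rpow_natCast]

/-- the element of `H` determined by a finitely supported sequence -/
def mkH (a : ℕ+ → ℂ) (ha : (Function.support a).Finite) : H := ⟨a, memℓp_of_finite ha⟩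

@[simp] lemma mkH_coe (a : ℕ+ → ℂ) (ha : (Function.support a).Finite) :
    ((mkH a ha : H) : ℕ+ → ℂ) = a := rfl

lemma norm_mkH (a : ℕ+ → ℂ) (ha : (Function.support a).Finite) :
    ‖mkH a ha‖ = l2norm a := by
  rw [lp.norm_eq_tsum_rpow (p := 2) (by norm_num) (mkH a ha)]
  rw [l2norm, Real.sqrt_eq_rpow]
  congr 1
  · apply tsum_congr
    intro n
    rw [mkH_coe]
    have : ((2 : ℝ≥0∞).toReal) = (2 : ℝ) := by norm_num
    rw [this, ← Real.rpow_natCast ‖a n‖ 2]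
    norm_num

lemma mkH_eq_sum_single (a : ℕ+ → ℂ) (ha : (Function.support a).Finite)
    {Sa : Finset ℕ+} (hSa : Function.support a ⊆ ↑Sa) :
    mkH a ha = ∑ d ∈ Sa, a d • lp.single 2 d 1 := by
  apply Subtype.ext
  rw [lp.coeFn_sum]
  funext m
  rw [mkH_coe]
  rw [Finset.sum_apply]
  by_cases hm : m ∈ Sa
  · rw [Finset.sum_eq_single m]
    · rw [lp.coeFn_smul, Pi.smul_apply, lp.single_apply_self, smul_eq_mul, mul_one]
    · intro d _ hd
      rw [lp.coeFn_smul, Pi.smul_apply,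
        lp.single_apply_ne 2 d 1 (Ne.symm hd), smul_zero]
    · intro h; exact absurd hm h
  · have h0 : a m = 0 := by
      by_contra h0; exact hm (hSa h0)
    rw [h0]
    apply (Finset.sum_eq_zero _).symm
    intro d hd
    have hdm : m ≠ d := by rintro rfl; exact hm hd
    rw [lp.coeFn_smul, Pi.smul_apply, lp.single_apply_ne 2 d 1 hdm, smul_zero]

open scoped InnerProductSpace in
lemma inner_mkH_left (b : ℕ+ → ℂ) (hb : (Function.support b).Finite)
    {Sb : Finset ℕ+} (hSb : Function.support b ⊆ ↑Sb) (y : H) :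
    ⟪mkH b hb, y⟫_ℂ = ∑ m ∈ Sb, conj (b m) * (y : ℕ+ → ℂ) m := by
  rw [mkH_eq_sum_single b hb hSb, sum_inner]
  apply Finset.sum_congr rfl
  intro m _
  rw [inner_smul_left, lp.inner_single_left]
  simp

-- ## dense subspace of finitely supported elements

def Dsub : Submodule ℂ H where
  carrier := {x : H | (Function.support (x : ℕ+ → ℂ)).Finite}
  add_mem' := by
    intro x y hx hy
    apply Set.Finite.subset (hx.union hy)
    intro n hn
    simp only [Function.mem_support, lp.coeFn_add, Pi.add_apply] at hn
    by_contra h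
    simp only [Set.mem_union, Function.mem_support, not_or, not_not] at h
    rw [h.1, h.2, add_zero] at hn
    exact hn rfl
  zero_mem' := by
    show (Function.support (((0 : H) : ℕ+ → ℂ))).Finite
    have h0 : (((0 : H) : ℕ+ → ℂ)) = 0 := lp.coeFn_zero _ _
    rw [h0, Function.support_zero]
    exact Set.finite_empty
  smul_mem' := by
    intro s x hx
    apply Set.Finite.subset hx
    intro n hn
    simp only [Function.mem_support, lp.coeFn_smul, Pi.smul_apply, smul_eq_mul] at hn
    simp only [Function.mem_support]
    intro h0
    rw [h0, mul_zero] at hn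
    exact hn rfl

lemma single_mem_Dsub (n : ℕ+) (v : ℂ) : lp.single 2 n v ∈ Dsub := by
  show (Function.support ((lp.single 2 n v : H) : ℕ+ → ℂ)).Finite
  apply Set.Finite.subset (Set.finite_singleton n)
  intro m hm
  simp only [Function.mem_support] at hm
  simp only [Set.mem_singleton_iff]
  by_contra h
  simp only [lp.single_apply, dif_neg h] at hm
  exact hm (by simp [h])

lemma mkH_mem_Dsub (a : ℕ+ → ℂ) (ha : (Function.support a).Finite) : mkH a ha ∈ Dsub := ha

lemma dense_Dsub : Dense (Dsub : Set H) := by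
  intro x
  have hs := lp.hasSum_single (E := fun _ : ℕ+ => ℂ) (by norm_num : (2:ℝ≥0∞) ≠ ⊤) x
  rw [HasSum] at hs
  apply mem_closure_of_tendsto hs
  filter_upwards with s
  show (∑ i ∈ s, lp.single 2 i ((x : ℕ+ → ℂ) i)) ∈ (Dsub : Set H)
  exact Submodule.sum_mem Dsub fun i _ => single_mem_Dsub i _

lemma denseRange_subtypeL : DenseRange (Dsub.subtypeL) := by
  have : Set.range (Dsub.subtypeL) = (Dsub : Set H) := Subtype.range_coe
  rw [DenseRange, this]
  exact dense_Dsub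

lemma isUniformInducing_subtypeL : IsUniformInducing (Dsub.subtypeL) :=
  isometry_subtype_coe.isUniformInducing

lemma Dsub_norm (x : Dsub) : ‖x‖ = l2norm ((x : H) : ℕ+ → ℂ) := by
  have h1 : (x : H) = mkH ((x : H) : ℕ+ → ℂ) x.2 := Subtype.ext rfl
  calc ‖x‖ = ‖mkH ((x : H) : ℕ+ → ℂ) x.2‖ := by rw [← h1]; rfl
  _ = l2norm ((x : H) : ℕ+ → ℂ) := norm_mkH _ _


open scoped InnerProductSpace

-- ## pairing with a Hankel operator

lemma pairing_eq_inner {T : H →L[ℂ] H} {α : ℕ+ → ℂ} (hT : IsHankel T α)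
    (a b : ℕ+ → ℂ) (ha : (Function.support a).Finite) (hb : (Function.support b).Finite) :
    ∑' n, α n * dConv a b n = ⟪mkH b hb, T (mkH a ha)⟫_ℂ := by
  rw [pairing_eq α a b ha.coe_toFinset.symm.subset hb.coe_toFinset.symm.subset]
  rw [inner_mkH_left b hb hb.coe_toFinset.symm.subset]
  have hTa : T (mkH a ha) = ∑ d ∈ ha.toFinset, a d • T (lp.single 2 d 1) := by
    rw [mkH_eq_sum_single a ha ha.coe_toFinset.symm.subset, map_sum]
    apply Finset.sum_congr rfl
    intro d _
    rw [map_smul]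
  have hcoe : ∀ m : ℕ+, (T (mkH a ha) : ℕ+ → ℂ) m = ∑ d ∈ ha.toFinset, a d * α (d * m) := by
    intro m
    rw [hTa, lp.coeFn_sum, Finset.sum_apply]
    apply Finset.sum_congr rfl
    intro d _
    rw [lp.coeFn_smul, Pi.smul_apply, hT d m, smul_eq_mul]
  rw [Finset.sum_comm]
  apply Finset.sum_congr rfl
  intro m _
  rw [hcoe m, Finset.mul_sum]
  apply Finset.sum_congr rfl
  intro d _
  ring

lemma norm_pairing_le {T : H →L[ℂ] H} {α : ℕ+ → ℂ} (hT : IsHankel T α)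
    (a b : ℕ+ → ℂ) (ha : (Function.support a).Finite) (hb : (Function.support b).Finite) :
    ‖∑' n, α n * dConv a b n‖ ≤ ‖T‖ * (l2norm a * l2norm b) := by
  rw [pairing_eq_inner hT a b ha hb]
  calc ‖⟪mkH b hb, T (mkH a ha)⟫_ℂ‖ ≤ ‖mkH b hb‖ * ‖T (mkH a ha)‖ := norm_inner_le_norm _ _
  _ ≤ ‖mkH b hb‖ * (‖T‖ * ‖mkH a ha‖) := by
      apply mul_le_mul_of_nonneg_left (T.le_opNorm _) (norm_nonneg _)
  _ = ‖T‖ * (l2norm a * l2norm b) := by rw [norm_mkH, norm_mkH]; ring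

-- summability of finitely supported
lemma summable_of_finite_support {f : ℕ+ → ℂ} (hf : (Function.support f).Finite) :
    Summable f := by
  apply summable_of_ne_finset_zero (s := hf.toFinset)
  intro n hn
  by_contra h0
  exact hn (hf.mem_toFinset.2 h0)

/-- Part 1, first claim -/
lemma part1_bound {T : H →L[ℂ] H} {α : ℕ+ → ℂ} (hT : IsHankel T α)
    {c : ℕ+ → ℂ} (hc : c ∈ XSet) :
    ‖∑' n : ℕ+, α n * c n‖ ≤ ‖T‖ * normX c := by
  -- first: the bound for each representation
  have key : ∀ L : List ((ℕ+ → ℂ) × (ℕ+ → ℂ)), XRep c L →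
      ‖∑' n : ℕ+, α n * c n‖ ≤ ‖T‖ * (L.map fun p => l2norm p.1 * l2norm p.2).sum := by
    intro L hL
    have hgen : ∀ L' : List ((ℕ+ → ℂ) × (ℕ+ → ℂ)),
        (∀ p ∈ L', (Function.support p.1).Finite ∧ (Function.support p.2).Finite) →
        ‖∑' n : ℕ+, α n * (L'.map fun p => dConv p.1 p.2 n).sum‖
          ≤ ‖T‖ * (L'.map fun p => l2norm p.1 * l2norm p.2).sum := by
      intro L'
      induction L' with
      | nil =>
        intro _
        simp only [List.map_nil, List.sum_nil, mul_zero]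
        rw [tsum_zero, norm_zero]
      | cons p L' ih =>
        intro hfin
        have hp := hfin p List.mem_cons_self
        have hrest : ∀ q ∈ L', (Function.support q.1).Finite ∧ (Function.support q.2).Finite :=
          fun q hq => hfin q (List.mem_cons_of_mem p hq)
        have hsupprest : (Function.support fun n => (L'.map fun q => dConv q.1 q.2 n).sum).Finite := by
          have : (fun n => (L'.map fun q => dConv q.1 q.2 n).sum) ∈ XSet := ⟨L', hrest, rfl⟩
          exact XSet_support_finite this
        have hs1 : Summable (fun n => α n * dConv p.1 p.2 n) := by
          apply summable_of_finite_support
          apply Set.Finite.subset (dConv_support_finite hp.1 hp.2)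
          intro n hn
          simp only [Function.mem_support] at hn ⊢
          intro h0; exact hn (by rw [h0, mul_zero])
        have hs2 : Summable (fun n => α n * (L'.map fun q => dConv q.1 q.2 n).sum) := by
          apply summable_of_finite_support
          apply Set.Finite.subset hsupprest
          intro n hn
          simp only [Function.mem_support] at hn ⊢
          intro h0; exact hn (by rw [h0, mul_zero])
        have hsplit : ∑' n : ℕ+, α n * ((p :: L').map fun q => dConv q.1 q.2 n).sum
            = (∑' n : ℕ+, α n * dConv p.1 p.2 n)
              + ∑' n : ℕ+, α n * (L'.map fun q => dConv q.1 q.2 n).sum := by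
          rw [← Summable.tsum_add hs1 hs2]
          apply tsum_congr
          intro n
          simp only [List.map_cons, List.sum_cons]
          ring
        rw [hsplit]
        simp only [List.map_cons, List.sum_cons, mul_add]
        calc ‖(∑' n : ℕ+, α n * dConv p.1 p.2 n)
              + ∑' n : ℕ+, α n * (L'.map fun q => dConv q.1 q.2 n).sum‖
            ≤ ‖∑' n : ℕ+, α n * dConv p.1 p.2 n‖
              + ‖∑' n : ℕ+, α n * (L'.map fun q => dConv q.1 q.2 n).sum‖ := norm_add_le _ _
          _ ≤ ‖T‖ * (l2norm p.1 * l2norm p.2)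
              + ‖T‖ * (L'.map fun q => l2norm q.1 * l2norm q.2).sum :=
              add_le_add (norm_pairing_le hT p.1 p.2 hp.1 hp.2) (ih hrest)
    have := hgen L hL.1
    have hcn : (fun n : ℕ+ => α n * c n) = fun n => α n * (L.map fun p => dConv p.1 p.2 n).sum := by
      funext n; rw [hL.2]
    rw [show (∑' n : ℕ+, α n * c n) = ∑' n : ℕ+, α n * (L.map fun p => dConv p.1 p.2 n).sum from by rw [hcn]]
    exact this
  -- now pass to the infimum
  obtain ⟨L0, hL0⟩ := hc
  by_cases hTz : ‖T‖ = 0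
  · have := key L0 hL0
    rw [hTz, zero_mul] at this ⊢
    exact this
  · have hTpos : 0 < ‖T‖ := lt_of_le_of_ne (norm_nonneg T) (Ne.symm hTz)
    have hle : ‖∑' n : ℕ+, α n * c n‖ / ‖T‖ ≤ normX c := by
      have hmem : ((L0.map fun p => l2norm p.1 * l2norm p.2).sum)
          ∈ {x : ℝ | ∃ L, XRep c L ∧ x = (L.map fun p => l2norm p.1 * l2norm p.2).sum} :=
        ⟨L0, hL0, rfl⟩
      unfold normX
      refine le_csInf ⟨_, hmem⟩ ?_
      rintro x ⟨L, hL, rfl⟩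
      rw [div_le_iff₀ hTpos, mul_comm]
      exact key L hL
    calc ‖∑' n : ℕ+, α n * c n‖ = ‖T‖ * (‖∑' n : ℕ+, α n * c n‖ / ‖T‖) := by
          rw [mul_comm, div_mul_cancel₀ _ hTz]
      _ ≤ ‖T‖ * normX c := mul_le_mul_of_nonneg_left hle (le_of_lt hTpos)


-- ## l2norm of scalar multiple

lemma mkH_smul (s : ℂ) (a : ℕ+ → ℂ) (ha : (Function.support a).Finite)
    (hsa : (Function.support (s • a)).Finite) :
    mkH (s • a) hsa = s • mkH a ha := by
  apply Subtype.ext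
  rw [lp.coeFn_smul]
  rfl

lemma support_smul_finite {s : ℂ} {a : ℕ+ → ℂ} (ha : (Function.support a).Finite) :
    (Function.support (s • a)).Finite := by
  apply Set.Finite.subset ha
  intro n hn
  simp only [Function.mem_support, Pi.smul_apply, smul_eq_mul] at hn ⊢
  intro h0
  exact hn (by rw [h0, mul_zero])

lemma l2norm_smul (s : ℂ) (a : ℕ+ → ℂ) (ha : (Function.support a).Finite) :
    l2norm (s • a) = ‖s‖ * l2norm a := by
  rw [← norm_mkH a ha, ← norm_mkH (s • a) (support_smul_finite ha),
    mkH_smul s a ha (support_smul_finite ha), norm_smul]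

lemma mkH_eq_zero_of_l2norm {a : ℕ+ → ℂ} (ha : (Function.support a).Finite)
    (h : l2norm a = 0) : mkH a ha = 0 := by
  rw [← norm_eq_zero, norm_mkH]
  exact h

/-- Part 1, second claim -/
lemma part1_sup {T : H →L[ℂ] H} {α : ℕ+ → ℂ} (hT : IsHankel T α) :
    ‖T‖ = sSup {x : ℝ | ∃ c ∈ XSet, normX c ≤ 1 ∧ x = ‖∑' n : ℕ+, α n * c n‖} := by
  set S := {x : ℝ | ∃ c ∈ XSet, normX c ≤ 1 ∧ x = ‖∑' n : ℕ+, α n * c n‖} with hSdef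
  have h0S : (0:ℝ) ∈ S := by
    refine ⟨0, zero_mem_XSet, by rw [normX_zero]; norm_num, ?_⟩
    have : (fun n : ℕ+ => α n * (0 : ℕ+ → ℂ) n) = fun _ => 0 := by
      funext n; simp
    rw [this, tsum_zero, norm_zero]
  have hub : ∀ x ∈ S, x ≤ ‖T‖ := by
    rintro x ⟨c, hc, hc1, rfl⟩
    calc ‖∑' n : ℕ+, α n * c n‖ ≤ ‖T‖ * normX c := part1_bound hT hc
      _ ≤ ‖T‖ * 1 := mul_le_mul_of_nonneg_left hc1 (norm_nonneg T)
      _ = ‖T‖ := mul_one _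
  have hbdd : BddAbove S := ⟨‖T‖, hub⟩
  have hMT : sSup S ≤ ‖T‖ := csSup_le ⟨0, h0S⟩ hub
  set M := sSup S with hM
  have hM0 : 0 ≤ M := le_csSup hbdd h0S
  -- finite case
  have hfin : ∀ (a b : ℕ+ → ℂ) (ha : (Function.support a).Finite)
      (hb : (Function.support b).Finite),
      ‖⟪mkH b hb, T (mkH a ha)⟫_ℂ‖ ≤ M * (‖mkH a ha‖ * ‖mkH b hb‖) := by
    intro a b ha hb
    by_cases hla : l2norm a = 0
    · rw [mkH_eq_zero_of_l2norm ha hla, map_zero, inner_zero_right, norm_zero]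
      positivity
    by_cases hlb : l2norm b = 0
    · rw [mkH_eq_zero_of_l2norm hb hlb, inner_zero_left, norm_zero]
      positivity
    have hla' : 0 < l2norm a := lt_of_le_of_ne (l2norm_nonneg a) (Ne.symm hla)
    have hlb' : 0 < l2norm b := lt_of_le_of_ne (l2norm_nonneg b) (Ne.symm hlb)
    set s : ℝ := ((l2norm a) * (l2norm b))⁻¹ with hs
    have hspos : 0 < s := by positivity
    set c : ℕ+ → ℂ := (s : ℂ) • dConv a b with hc
    have hcX : c ∈ XSet := smul_mem_XSet _ (dConv_mem_XSet ha hb)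
    have hc1 : normX c ≤ 1 := by
      have h1 : c = dConv ((s : ℂ) • a) b := by rw [hc, dConv_smul_left]
      rw [h1]
      calc normX (dConv ((s : ℂ) • a) b) ≤ l2norm ((s : ℂ) • a) * l2norm b :=
            normX_dConv_le (support_smul_finite ha) hb
        _ = ‖(s : ℂ)‖ * l2norm a * l2norm b := by rw [l2norm_smul _ _ ha]
        _ = 1 := by
            rw [Complex.norm_real, Real.norm_eq_abs, abs_of_pos hspos, hs]
            field_simp
    have hval : ∑' n : ℕ+, α n * c n = (s : ℂ) * ∑' n : ℕ+, α n * dConv a b n := by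
      rw [← tsum_mul_left]
      apply tsum_congr
      intro n
      rw [hc]
      show α n * ((s:ℂ) * dConv a b n) = (s:ℂ) * (α n * dConv a b n)
      ring
    have hmemS : ‖∑' n : ℕ+, α n * c n‖ ∈ S := ⟨c, hcX, hc1, rfl⟩
    have hle : ‖∑' n : ℕ+, α n * c n‖ ≤ M := le_csSup hbdd hmemS
    have heq : ‖∑' n : ℕ+, α n * c n‖ = s * ‖⟪mkH b hb, T (mkH a ha)⟫_ℂ‖ := by
      rw [hval, norm_mul, Complex.norm_real, Real.norm_eq_abs, abs_of_pos hspos,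
        pairing_eq_inner hT a b ha hb]
    rw [heq] at hle
    rw [norm_mkH, norm_mkH]
    calc ‖⟪mkH b hb, T (mkH a ha)⟫_ℂ‖
        = (l2norm a * l2norm b) * (s * ‖⟪mkH b hb, T (mkH a ha)⟫_ℂ‖) := by
          rw [hs]; field_simp
      _ ≤ (l2norm a * l2norm b) * M := by
          apply mul_le_mul_of_nonneg_left hle (by positivity)
      _ = M * (l2norm a * l2norm b) := by ring
  -- extend to all of H by density
  have hall : ∀ x y : H, ‖⟪y, T x⟫_ℂ‖ ≤ M * (‖x‖ * ‖y‖) := by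
    have hclosed : IsClosed {p : H × H | ‖⟪p.2, T p.1⟫_ℂ‖ ≤ M * (‖p.1‖ * ‖p.2‖)} := by
      apply isClosed_le
      · exact (continuous_snd.inner (T.continuous.comp continuous_fst)).norm
      · exact continuous_const.mul (continuous_fst.norm.mul continuous_snd.norm)
    have hdense : Dense ((Dsub : Set H) ×ˢ (Dsub : Set H)) := dense_Dsub.prod dense_Dsub
    have hsub : ((Dsub : Set H) ×ˢ (Dsub : Set H))
        ⊆ {p : H × H | ‖⟪p.2, T p.1⟫_ℂ‖ ≤ M * (‖p.1‖ * ‖p.2‖)} := by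
      rintro ⟨x, y⟩ ⟨hx, hy⟩
      have hxm : mkH ((x : ℕ+ → ℂ)) hx = x := Subtype.ext rfl
      have hym : mkH ((y : ℕ+ → ℂ)) hy = y := Subtype.ext rfl
      have := hfin (x : ℕ+ → ℂ) (y : ℕ+ → ℂ) hx hy
      rwa [hxm, hym] at this
    intro x y
    have hmem : (x, y) ∈ closure ((Dsub : Set H) ×ˢ (Dsub : Set H)) := by
      rw [hdense.closure_eq]; trivial
    have h2 := (hclosed.closure_subset_iff.2 hsub) hmem
    simpa only [Set.mem_setOf_eq] using h2
  -- operator norm bound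
  have hTM : ‖T‖ ≤ M := by
    apply T.opNorm_le_bound hM0
    intro x
    by_cases h0 : ‖T x‖ = 0
    · rw [h0]; positivity
    have hx := hall x (T x)
    rw [inner_self_eq_norm_sq_to_K] at hx
    rw [norm_pow, RCLike.norm_ofReal, abs_of_nonneg (norm_nonneg _), sq] at hx
    have hTx : 0 < ‖T x‖ := lt_of_le_of_ne (norm_nonneg _) (Ne.symm h0)
    have := (mul_le_mul_iff_of_pos_right hTx).1 (by linarith [hx] : ‖T x‖ * ‖T x‖ ≤ (M * ‖x‖) * ‖T x‖)
    exact this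
  exact le_antisymm hTM hMT


-- ## Part 2: linearity of ℓ over finite sums of chi's

lemma ell_zero (ℓ : (ℕ+ → ℂ) → ℂ)
    (hsmul : ∀ (s : ℂ), ∀ c ∈ XSet, ℓ (s • c) = s * ℓ c) : ℓ 0 = 0 := by
  have h := hsmul 0 0 zero_mem_XSet
  rw [zero_smul] at h
  rw [h, zero_mul]

lemma ell_sum (ℓ : (ℕ+ → ℂ) → ℂ)
    (hadd : ∀ c ∈ XSet, ∀ c' ∈ XSet, ℓ (c + c') = ℓ c + ℓ c')
    (hsmul : ∀ (s : ℂ), ∀ c ∈ XSet, ℓ (s • c) = s * ℓ c)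
    {ι : Type*} (s : Finset ι) (g : ι → ℂ) (ν : ι → ℕ+) :
    ((fun m => ∑ i ∈ s, g i * chi (ν i) m) ∈ XSet) ∧
    ℓ (fun m => ∑ i ∈ s, g i * chi (ν i) m) = ∑ i ∈ s, g i * ℓ (chi (ν i)) := by
  classical
  induction s using Finset.induction_on with
  | empty =>
    have h0 : (fun m : ℕ+ => ∑ i ∈ (∅ : Finset ι), g i * chi (ν i) m) = 0 := by
      funext m; simp
    rw [h0]
    exact ⟨zero_mem_XSet, by rw [ell_zero ℓ hsmul, Finset.sum_empty]⟩
  | @insert a s hi ih =>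
    have hfun : (fun m => ∑ i ∈ insert a s, g i * chi (ν i) m)
        = (g a • chi (ν a)) + (fun m => ∑ i ∈ s, g i * chi (ν i) m) := by
      funext m
      rw [Finset.sum_insert hi]
      rfl
    have h1 : g a • chi (ν a) ∈ XSet := smul_mem_XSet _ (chi_mem_XSet _)
    constructor
    · rw [hfun]; exact add_mem_XSet h1 ih.1
    · rw [hfun, hadd _ h1 _ ih.1, hsmul _ _ (chi_mem_XSet _), ih.2, Finset.sum_insert hi]

lemma ell_dConv (ℓ : (ℕ+ → ℂ) → ℂ)
    (hadd : ∀ c ∈ XSet, ∀ c' ∈ XSet, ℓ (c + c') = ℓ c + ℓ c')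
    (hsmul : ∀ (s : ℂ), ∀ c ∈ XSet, ℓ (s • c) = s * ℓ c)
    (a b : ℕ+ → ℂ) (ha : (Function.support a).Finite) (hb : (Function.support b).Finite) :
    ℓ (dConv a b) = ∑ d ∈ ha.toFinset, ∑ m ∈ hb.toFinset,
      (a d * conj (b m)) * ℓ (chi (d * m)) := by
  have hfun : dConv a b = fun k => ∑ p ∈ ha.toFinset ×ˢ hb.toFinset,
      (a p.1 * conj (b p.2)) * chi (p.1 * p.2) k := by
    funext k
    rw [dConv_eq_sum a b ha.coe_toFinset.symm.subset hb.coe_toFinset.symm.subset k,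
      Finset.sum_product]
    apply Finset.sum_congr rfl
    intro d _
    apply Finset.sum_congr rfl
    intro m _
    unfold chi
    by_cases h : d * m = k
    · rw [if_pos h, if_pos h.symm, mul_one]
    · rw [if_neg h, if_neg (fun hh => h hh.symm), mul_zero]
  rw [hfun, (ell_sum ℓ hadd hsmul (ha.toFinset ×ˢ hb.toFinset)
    (fun p => a p.1 * conj (b p.2)) (fun p => p.1 * p.2)).2, Finset.sum_product]

lemma ell_eq_tsum (ℓ : (ℕ+ → ℂ) → ℂ)
    (hadd : ∀ c ∈ XSet, ∀ c' ∈ XSet, ℓ (c + c') = ℓ c + ℓ c')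
    (hsmul : ∀ (s : ℂ), ∀ c ∈ XSet, ℓ (s • c) = s * ℓ c)
    {c : ℕ+ → ℂ} (hc : c ∈ XSet) :
    ℓ c = ∑' n : ℕ+, ℓ (chi n) * c n := by
  have hcfin := XSet_support_finite hc
  set Sc := hcfin.toFinset with hSc
  have hcfun : c = fun m => ∑ n ∈ Sc, c n * chi n m := by
    funext m
    by_cases hm : m ∈ Sc
    · rw [Finset.sum_eq_single m]
      · rw [show chi m m = 1 from if_pos rfl, mul_one]
      · intro n _ hn
        rw [show chi n m = 0 from if_neg (fun h : m = n => hn h.symm), mul_zero]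
      · intro h; exact absurd hm h
    · have h0 : c m = 0 := by
        by_contra h0
        exact hm (hcfin.mem_toFinset.2 h0)
      rw [h0]
      apply (Finset.sum_eq_zero _).symm
      intro n hn
      have hmn : m ≠ n := by rintro rfl; exact hm hn
      rw [show chi n m = 0 from if_neg hmn, mul_zero]
  have htsum : ∑' n : ℕ+, ℓ (chi n) * c n = ∑ n ∈ Sc, ℓ (chi n) * c n := by
    apply tsum_eq_finsum
    intro n hn
    simp only [Function.mem_support] at hn
    have : c n ≠ 0 := by
      intro h0; apply hn; rw [h0, mul_zero]
    exact hcfin.mem_toFinset.2 this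
  rw [htsum]
  calc ℓ c = ℓ (fun m => ∑ n ∈ Sc, c n * chi n m) := by rw [← hcfun]
    _ = ∑ n ∈ Sc, c n * ℓ (chi n) := (ell_sum ℓ hadd hsmul Sc c id).2
    _ = ∑ n ∈ Sc, ℓ (chi n) * c n := by
        apply Finset.sum_congr rfl; intro n _; ring

lemma coe_single_eq_chi (n : ℕ+) : ((lp.single 2 n (1:ℂ) : H) : ℕ+ → ℂ) = chi n := by
  funext j
  by_cases h : j = n
  · subst h
    rw [lp.single_apply_self, show chi j j = 1 from if_pos rfl]
  · rw [lp.single_apply_ne 2 n 1 h, show chi n j = 0 from if_neg h]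


lemma exists_hankel (ℓ : (ℕ+ → ℂ) → ℂ)
    (hadd : ∀ c ∈ XSet, ∀ c' ∈ XSet, ℓ (c + c') = ℓ c + ℓ c')
    (hsmul : ∀ (s : ℂ), ∀ c ∈ XSet, ℓ (s • c) = s * ℓ c)
    (C' : ℝ) (hC'0 : 0 ≤ C')
    (hbound' : ∀ c ∈ XSet, ‖ℓ c‖ ≤ C' * normX c) :
    ∃ T : H →L[ℂ] H, IsHankel T (fun n => ℓ (chi n)) := by
  classical
  have hdb : ∀ (a b : ℕ+ → ℂ), (Function.support a).Finite → (Function.support b).Finite →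
      ‖ℓ (dConv a b)‖ ≤ C' * (l2norm a * l2norm b) := by
    intro a b ha hb
    calc ‖ℓ (dConv a b)‖ ≤ C' * normX (dConv a b) := hbound' _ (dConv_mem_XSet ha hb)
      _ ≤ C' * (l2norm a * l2norm b) := mul_le_mul_of_nonneg_left (normX_dConv_le ha hb) hC'0
  -- step 1: for each finitely supported x, a bounded functional F x on H
  have hF : ∀ x : Dsub, ∃ F : H →L[ℂ] ℂ,
      (∀ z : Dsub, F (z : H) = conj (ℓ (dConv ((x : H) : ℕ+ → ℂ) ((z : H) : ℕ+ → ℂ)))) ∧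
      ∀ y : H, ‖F y‖ ≤ (C' * l2norm ((x : H) : ℕ+ → ℂ)) * ‖y‖ := by
    intro x
    have ha : (Function.support ((x : H) : ℕ+ → ℂ)).Finite := x.2
    set a : ℕ+ → ℂ := ((x : H) : ℕ+ → ℂ) with haa
    set f : Dsub →ₗ[ℂ] ℂ := {
      toFun := fun z => conj (ℓ (dConv a ((z : H) : ℕ+ → ℂ)))
      map_add' := by
        intro u w
        have hco : (((u + w : Dsub) : H) : ℕ+ → ℂ)
            = ((u : H) : ℕ+ → ℂ) + ((w : H) : ℕ+ → ℂ) := by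
          rw [Submodule.coe_add, lp.coeFn_add]
        dsimp only
        rw [hco, dConv_add_right,
          hadd _ (dConv_mem_XSet ha u.2) _ (dConv_mem_XSet ha w.2), map_add]
      map_smul' := by
        intro s u
        have hco : (((s • u : Dsub) : H) : ℕ+ → ℂ) = s • ((u : H) : ℕ+ → ℂ) := by
          rw [Submodule.coe_smul, lp.coeFn_smul]
        dsimp only
        rw [hco, dConv_smul_right, hsmul _ _ (dConv_mem_XSet ha u.2), map_mul,
          RingHom.id_apply, Complex.conj_conj, smul_eq_mul]
    } with hfdef
    have hfb : ∀ z : Dsub, ‖f z‖ ≤ (C' * l2norm a) * ‖z‖ := by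
      intro z
      have hfz : f z = conj (ℓ (dConv a ((z : H) : ℕ+ → ℂ))) := rfl
      rw [hfz, RCLike.norm_conj]
      calc ‖ℓ (dConv a ((z : H) : ℕ+ → ℂ))‖
          ≤ C' * (l2norm a * l2norm ((z : H) : ℕ+ → ℂ)) := hdb _ _ ha z.2
        _ = (C' * l2norm a) * ‖z‖ := by rw [Dsub_norm]; ring
    set fc := f.mkContinuous (C' * l2norm a) hfb with hfc
    set F := fc.extend Dsub.subtypeL with hFdef
    have h1 : ∀ z : Dsub, F (z : H) = conj (ℓ (dConv a ((z : H) : ℕ+ → ℂ))) := by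
      intro z
      have he := ContinuousLinearMap.extend_eq fc denseRange_subtypeL
        isUniformInducing_subtypeL z
      rw [hFdef]
      exact he
    have h2 : ∀ y : H, ‖F y‖ ≤ (C' * l2norm a) * ‖y‖ := by
      have hcl : IsClosed {y : H | ‖F y‖ ≤ (C' * l2norm a) * ‖y‖} :=
        isClosed_le F.continuous.norm (continuous_const.mul continuous_norm)
      have hsub2 : (Dsub : Set H) ⊆ {y : H | ‖F y‖ ≤ (C' * l2norm a) * ‖y‖} := by
        intro y hy
        have hz := h1 ⟨y, hy⟩
        show ‖F y‖ ≤ (C' * l2norm a) * ‖y‖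
        rw [show F y = F ((⟨y, hy⟩ : Dsub) : H) from rfl, hz, RCLike.norm_conj]
        calc ‖ℓ (dConv a (((⟨y, hy⟩ : Dsub) : H) : ℕ+ → ℂ))‖
            ≤ C' * (l2norm a * l2norm (((⟨y, hy⟩ : Dsub) : H) : ℕ+ → ℂ)) := hdb _ _ ha hy
          _ = (C' * l2norm a) * ‖(⟨y, hy⟩ : Dsub)‖ := by rw [Dsub_norm]; ring
          _ = (C' * l2norm a) * ‖y‖ := rfl
      intro y
      have hmem : y ∈ closure (Dsub : Set H) := by rw [dense_Dsub.closure_eq]; trivial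
      exact (hcl.closure_subset_iff.2 hsub2) hmem
    exact ⟨F, h1, h2⟩
  choose F hF1 hF2 using hF
  -- step 2: Riesz representation
  set v : Dsub → H := fun x => (InnerProductSpace.toDual ℂ H).symm (F x) with hv
  have hvin : ∀ (x : Dsub) (y : H), ⟪v x, y⟫_ℂ = F x y := by
    intro x y
    rw [hv]
    exact InnerProductSpace.toDual_symm_apply
  have hvnorm : ∀ x : Dsub, ‖v x‖ ≤ C' * ‖x‖ := by
    intro x
    have h1 : ‖v x‖ = ‖F x‖ := LinearIsometryEquiv.norm_map _ _
    have h2 : ‖F x‖ ≤ C' * l2norm ((x : H) : ℕ+ → ℂ) :=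
      ContinuousLinearMap.opNorm_le_bound _
        (mul_nonneg hC'0 (l2norm_nonneg _)) (hF2 x)
    rw [h1, Dsub_norm x]
    exact h2
  -- step 3: F is linear in the first variable (by density)
  have hFadd : ∀ u w : Dsub, F (u + w) = F u + F w := by
    intro u w
    apply ContinuousLinearMap.coeFn_injective
    apply Continuous.ext_on dense_Dsub (F (u + w)).continuous (F u + F w).continuous
    intro z hz
    have hcoadd : (((u + w : Dsub) : H) : ℕ+ → ℂ)
        = ((u : H) : ℕ+ → ℂ) + ((w : H) : ℕ+ → ℂ) := by
      rw [Submodule.coe_add, lp.coeFn_add]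
    show F (u + w) z = (F u + F w) z
    rw [show z = ((⟨z, hz⟩ : Dsub) : H) from rfl, hF1, ContinuousLinearMap.add_apply, hF1, hF1,
      hcoadd, dConv_add_left,
      hadd _ (dConv_mem_XSet u.2 hz) _ (dConv_mem_XSet w.2 hz), map_add]
  have hFsmul : ∀ (s : ℂ) (u : Dsub), F (s • u) = conj s • F u := by
    intro s u
    apply ContinuousLinearMap.coeFn_injective
    apply Continuous.ext_on dense_Dsub (F (s • u)).continuous (conj s • F u).continuous
    intro z hz
    have hcosmul : (((s • u : Dsub) : H) : ℕ+ → ℂ) = s • ((u : H) : ℕ+ → ℂ) := by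
      rw [Submodule.coe_smul, lp.coeFn_smul]
    show F (s • u) z = (conj s • F u) z
    rw [show z = ((⟨z, hz⟩ : Dsub) : H) from rfl, hF1, ContinuousLinearMap.smul_apply, hF1,
      hcosmul, dConv_smul_left, hsmul _ _ (dConv_mem_XSet u.2 hz), map_mul, smul_eq_mul]
  -- step 4: the operator on Dsub
  set T0 : Dsub →ₗ[ℂ] H := {
    toFun := v
    map_add' := by
      intro u w
      apply ext_inner_right ℂ
      intro y
      rw [inner_add_left, hvin, hvin, hvin, hFadd, ContinuousLinearMap.add_apply]
    map_smul' := by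
      intro s u
      apply ext_inner_right ℂ
      intro y
      rw [RingHom.id_apply, inner_smul_left, hvin, hvin, hFsmul,
        ContinuousLinearMap.smul_apply, smul_eq_mul]
  } with hT0
  have hT0b : ∀ x : Dsub, ‖T0 x‖ ≤ C' * ‖x‖ := hvnorm
  set Tc := T0.mkContinuous C' hT0b with hTc
  set T := Tc.extend Dsub.subtypeL with hT
  refine ⟨T, ?_⟩
  intro n m
  set xn : Dsub := ⟨lp.single 2 n 1, single_mem_Dsub n 1⟩ with hxn
  set xm : Dsub := ⟨lp.single 2 m 1, single_mem_Dsub m 1⟩ with hxm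
  have hTn : T (lp.single 2 n 1) = v xn := by
    have he := ContinuousLinearMap.extend_eq Tc denseRange_subtypeL
      isUniformInducing_subtypeL xn
    rw [hT]
    exact he
  rw [hTn]
  have hcm : ((v xn : H) : ℕ+ → ℂ) m = ⟪lp.single 2 m (1:ℂ), v xn⟫_ℂ := by
    rw [lp.inner_single_left]
    simp
  rw [hcm, ← inner_conj_symm, hvin]
  rw [show (lp.single 2 m (1:ℂ) : H) = (xm : H) from rfl, hF1]
  have hxncoe : ((xn : H) : ℕ+ → ℂ) = chi n := coe_single_eq_chi n
  have hxmcoe : ((xm : H) : ℕ+ → ℂ) = chi m := coe_single_eq_chi m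
  rw [hxncoe, hxmcoe, dConv_chi, Complex.conj_conj]

end HPD

/-- for each bounded multiplicative Hankel operator `m = M(α)` the
functional `Jm(c) = ∑_n α(n) c(n)` on `X` is bounded with `‖Jm‖_{𝒳*} = ‖M(α)‖`
(hence extends to the completion `𝒳`), and `J : ℳ → 𝒳*` is onto: every bounded
linear functional on `X` is of this form. -/
theorem hankel_predual_duality :
    (∀ (α : ℕ+ → ℂ) (T : H →L[ℂ] H), IsHankel T α →
      (∀ c ∈ XSet, ‖∑' n : ℕ+, α n * c n‖ ≤ ‖T‖ * normX c) ∧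
      ‖T‖ = sSup {x : ℝ | ∃ c ∈ XSet, normX c ≤ 1 ∧ x = ‖∑' n : ℕ+, α n * c n‖}) ∧
    (∀ (ℓ : (ℕ+ → ℂ) → ℂ) (C : ℝ),
      (∀ c ∈ XSet, ∀ c' ∈ XSet, ℓ (c + c') = ℓ c + ℓ c') →
      (∀ (s : ℂ), ∀ c ∈ XSet, ℓ (s • c) = s * ℓ c) →
      (∀ c ∈ XSet, ‖ℓ c‖ ≤ C * normX c) →
      ∃ (α : ℕ+ → ℂ) (T : H →L[ℂ] H), IsHankel T α ∧
        ∀ c ∈ XSet, ℓ c = ∑' n : ℕ+, α n * c n) := by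
  constructor
  · intro α T hT
    exact ⟨fun c hc => HPD.part1_bound hT hc, HPD.part1_sup hT⟩
  · intro ℓ C hadd hsmul hbound
    have hC'0 : (0:ℝ) ≤ max C 0 := le_max_right _ _
    have hbound' : ∀ c ∈ XSet, ‖ℓ c‖ ≤ (max C 0) * normX c := fun c hc =>
      le_trans (hbound c hc)
        (mul_le_mul_of_nonneg_right (le_max_left _ _) (HPD.normX_nonneg c hc))
    obtain ⟨T, hT⟩ := HPD.exists_hankel ℓ hadd hsmul (max C 0) hC'0 hbound'
    refine ⟨fun n => ℓ (HPD.chi n), T, hT, ?_⟩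
    intro c hc
    exact HPD.ell_eq_tsum ℓ hadd hsmul hc
end
end
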